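/- Let d = 2, W(x) = |x| (Euclidean norm), Δx_1 = Δx_2 = 1, and p ∈ (0,1). Let ρ^0 be the probability measure on ℝ² charging the points (0,0), (1,0) and (0,1) with respective weights 1 − p, p/2 and p/2, and let ρ^1 be the probability measure obtained from ρ^0 by one step of the upwind scheme with time step Δt. Then there exists a constant C ≥ 0, depending only on p, such that for all Δt ∈ (0, 1/4): |∬_{ℝ²×ℝ²} |x − y| ρ^1(dx) ρ^1(dy) − ∬_{ℝ²×ℝ²} |x − y| ρ^0(dx) ρ^0(dy) − (√2 − 1) p² (2p − 1) Δt| ≤ C Δt². In particular, for p > 1/2 the interaction potential increases at first order in Δt. -/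

import Mathlib

open MeasureTheory Real Set
open scoped RealInnerProductSpace ENNReal

noncomputable section

/-- `ℝ²` with the Euclidean structure. -/
abbrev Euc2 := EuclideanSpace ℝ (Fin 2)

/-- Positive part `r⁺ = max(r,0)`. -/
def pos (r : ℝ) : ℝ := max r 0

/-- Negative part `r⁻ = max(-r,0)`. -/
def neg (r : ℝ) : ℝ := max (-r) 0

open Classical in
/-- `∇̂W` for `W(x) = |x|`: equal to `x/|x|` away from `0`, and `0` at `0`. -/
def hatS (x : Euc2) : Euc2 := if x = 0 then 0 else ‖x‖⁻¹ • x

/-- The node `x_J = (J_1, J_2)` (mesh steps `Δx_1 = Δx_2 = 1`). -/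
def node2 (J : ℤ × ℤ) : Euc2 :=
  (EuclideanSpace.equiv (Fin 2) ℝ).symm ![(J.1 : ℝ), (J.2 : ℝ)]

/-- The canonical basis vectors of `ℤ²`. -/
def eVec : Fin 2 → ℤ × ℤ := ![(1, 0), (0, 1)]

/-- The initial weights: mass `1-p` at `(0,0)`, `p/2` at `(1,0)` and `p/2` at `(0,1)`. -/
def ρ0w (p : ℝ) (J : ℤ × ℤ) : ℝ :=
  if J = (0, 0) then 1 - p else if J = (1, 0) then p / 2 else if J = (0, 1) then p / 2 else 0

/-- The interaction potential `∬ |x-y| ρ(dx) ρ(dy)` of a discrete distribution of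
weights `w` on the nodes of the grid. -/
def interact (w : ℤ × ℤ → ℝ) : ℝ :=
  ∑' q : (ℤ × ℤ) × (ℤ × ℤ), w q.1 * w q.2 * ‖node2 q.1 - node2 q.2‖

/- ### Auxiliary lemmas -/

lemma node2_eq_zero {J : ℤ × ℤ} (h : J = (0,0)) : node2 J = 0 := by
  subst h; ext i; fin_cases i <;> simp [node2]

lemma node2_ne_zero {J : ℤ × ℤ} (h : J ≠ (0,0)) : node2 J ≠ 0 := by
  intro hc
  apply h
  have h1 : node2 J 0 = 0 := by rw [hc]; rfl
  have h2 : node2 J 1 = 0 := by rw [hc]; rfl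
  have : (J.1 : ℝ) = 0 := h1
  have : (J.2 : ℝ) = 0 := h2
  have e1 : J.1 = 0 := by exact_mod_cast ‹(J.1:ℝ) = 0›
  have e2 : J.2 = 0 := by exact_mod_cast ‹(J.2:ℝ) = 0›
  ext <;> simp [e1, e2]

lemma norm_node2 (J : ℤ × ℤ) : ‖node2 J‖ = Real.sqrt ((J.1:ℝ)^2 + (J.2:ℝ)^2) := by
  rw [EuclideanSpace.norm_eq]
  simp [Fin.sum_univ_two, node2, sq_abs]

lemma node2_sub (J K : ℤ × ℤ) : node2 J - node2 K = node2 (J - K) := by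
  ext i; fin_cases i <;> simp [node2]

lemma hatS_node2 {J : ℤ × ℤ} (h : J ≠ (0,0)) (i : Fin 2) :
    hatS (node2 J) i = (Real.sqrt ((J.1:ℝ)^2 + (J.2:ℝ)^2))⁻¹ * node2 J i := by
  rw [hatS, if_neg (node2_ne_zero h), PiLp.smul_apply, norm_node2]; rfl

lemma hatS_zero' (i : Fin 2) : hatS (node2 (0,0)) i = 0 := by
  rw [hatS, if_pos (node2_eq_zero rfl)]; rfl

lemma hatS_zero0 (i : Fin 2) : hatS (node2 0) i = 0 := hatS_zero' i

lemma ρ0w_zero {p : ℝ} {K : ℤ × ℤ} (h0 : K ≠ (0,0)) (h1 : K ≠ (1,0)) (h2 : K ≠ (0,1)) :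
    ρ0w p K = 0 := by rw [ρ0w, if_neg h0, if_neg h1, if_neg h2]

lemma ρ0w_zero' (p : ℝ) {u v : ℤ} (h0 : ¬(u = 0 ∧ v = 0)) (h1 : ¬(u = 1 ∧ v = 0))
    (h2 : ¬(u = 0 ∧ v = 1)) : ρ0w p (u, v) = 0 :=
  ρ0w_zero (by simp [Prod.ext_iff]; omega) (by simp [Prod.ext_iff]; omega)
    (by simp [Prod.ext_iff]; omega)

lemma tsum_rho (p : ℝ) (f : ℤ × ℤ → ℝ) :
    ∑' K : ℤ × ℤ, ρ0w p K * f K = (1-p) * f (0,0) + p/2 * f (1,0) + p/2 * f (0,1) := by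
  rw [tsum_eq_sum (s := {((0:ℤ),(0:ℤ)), (1,0), (0,1)})
    (by intro K hK; simp at hK; rw [ρ0w_zero hK.1 hK.2.1 hK.2.2, zero_mul])]
  rw [Finset.sum_insert (by decide), Finset.sum_insert (by decide), Finset.sum_singleton]
  simp [ρ0w]; ring

lemma pos_eq {r : ℝ} (h : 0 ≤ r) : pos r = r := max_eq_left h
lemma pos_eq0 {r : ℝ} (h : r ≤ 0) : pos r = 0 := max_eq_right h
lemma neg_eq {r : ℝ} (h : r ≤ 0) : neg r = -r := max_eq_left (by linarith)
lemma neg_eq0 {r : ℝ} (h : 0 ≤ r) : neg r = 0 := max_eq_right (by linarith)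

/-- The weights after one upwind step. -/
def wgt (p t : ℝ) (J : ℤ × ℤ) : ℝ :=
  if J = (0,0) then 1 - p + t * p^2 * Real.sqrt 2 / 4
  else if J = (1,0) then p/2 - t * p^2 * Real.sqrt 2 / 4
  else if J = (0,1) then p/2 - t * p^2 * Real.sqrt 2 / 4
  else if J = (1,1) then t * p^2 * Real.sqrt 2 / 4
  else 0

lemma interact_four (w : ℤ × ℤ → ℝ)
    (h : ∀ J, J ∉ ({(0,0),(1,0),(0,1),(1,1)} : Finset (ℤ × ℤ)) → w J = 0) :
    interact w =
      ∑ J ∈ ({(0,0),(1,0),(0,1),(1,1)} : Finset (ℤ × ℤ)),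
        ∑ K ∈ ({(0,0),(1,0),(0,1),(1,1)} : Finset (ℤ × ℤ)),
          w J * w K * ‖node2 J - node2 K‖ := by
  rw [interact, tsum_eq_sum
    (s := ({(0,0),(1,0),(0,1),(1,1)} : Finset (ℤ × ℤ)) ×ˢ
          ({(0,0),(1,0),(0,1),(1,1)} : Finset (ℤ × ℤ))) ?_, Finset.sum_product]
  intro q hq
  rw [Finset.mem_product, not_and_or] at hq
  rcases hq with hq | hq
  · rw [h _ hq, zero_mul, zero_mul]
  · rw [h _ hq, mul_zero, zero_mul]

/-- One step of the upwind scheme for `W(x) = |x|` may increase the interaction potential: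
it changes at first order by `(√2 - 1) p² (2p - 1) Δt`. -/
theorem stmt9 (p : ℝ) (hp0 : 0 < p) (hp1 : p < 1) :
    ∃ C : ℝ, 0 ≤ C ∧ ∀ Δt : ℝ, 0 < Δt → Δt < 1 / 4 →
      ∀ (a : ℤ × ℤ → Fin 2 → ℝ) (ρ1 : ℤ × ℤ → ℝ),
        (∀ J i, a J i = -∑' K : ℤ × ℤ, ρ0w p K * hatS (node2 J - node2 K) i) →
        (∀ J, ρ1 J = ρ0w p J - ∑ i : Fin 2, Δt *
          (pos (a J i) * ρ0w p J - neg (a (J + eVec i) i) * ρ0w p (J + eVec i)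
            - pos (a (J - eVec i) i) * ρ0w p (J - eVec i) + neg (a J i) * ρ0w p J)) →
        |interact ρ1 - interact (ρ0w p)
            - (Real.sqrt 2 - 1) * p ^ 2 * (2 * p - 1) * Δt| ≤ C * Δt ^ 2 := by
  have hsq : Real.sqrt 2 ^ 2 = 2 := Real.sq_sqrt (by norm_num)
  have hs0 : 0 < Real.sqrt 2 := Real.sqrt_pos.2 (by norm_num)
  have hs2 : Real.sqrt 2 ≤ 2 := by nlinarith
  have hinv : (Real.sqrt 2)⁻¹ = Real.sqrt 2 / 2 := by
    field_simp
    exact hsq.symm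
  refine ⟨(2 - Real.sqrt 2) / 2 * p ^ 4, by nlinarith [pow_pos hp0 4], ?_⟩
  intro Δt hΔt _ a ρ1 ha hρ1
  -- velocities at the three support points
  have haO0 : a (0,0) 0 = p/2 := by
    rw [ha, tsum_rho]; simp only [node2_sub]; norm_num
    rw [hatS_zero0, hatS_node2 (by decide), hatS_node2 (by decide)]
    norm_num [node2]
  have haO1 : a (0,0) 1 = p/2 := by
    rw [ha, tsum_rho]; simp only [node2_sub]; norm_num
    rw [hatS_zero0, hatS_node2 (by decide), hatS_node2 (by decide)]
    norm_num [node2]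
  have haA0 : a (1,0) 0 = p - 1 - p/2 * (Real.sqrt 2)⁻¹ := by
    rw [ha, tsum_rho]; simp only [node2_sub]; norm_num
    rw [hatS_zero0, hatS_node2 (by decide), hatS_node2 (by decide)]
    norm_num [node2]; try ring
  have haA1 : a (1,0) 1 = p/2 * (Real.sqrt 2)⁻¹ := by
    rw [ha, tsum_rho]; simp only [node2_sub]; norm_num
    rw [hatS_zero0, hatS_node2 (by decide), hatS_node2 (by decide)]
    norm_num [node2]
  have haB0 : a (0,1) 0 = p/2 * (Real.sqrt 2)⁻¹ := by
    rw [ha, tsum_rho]; simp only [node2_sub]; norm_num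
    rw [hatS_zero0, hatS_node2 (by decide), hatS_node2 (by decide)]
    norm_num [node2]
  have haB1 : a (0,1) 1 = p - 1 - p/2 * (Real.sqrt 2)⁻¹ := by
    rw [ha, tsum_rho]; simp only [node2_sub]; norm_num
    rw [hatS_zero0, hatS_node2 (by decide), hatS_node2 (by decide)]
    norm_num [node2]; try ring
  -- sign facts
  have hq0 : (0:ℝ) ≤ p/2 := by linarith
  have hq1 : (0:ℝ) ≤ p/2 * (Real.sqrt 2)⁻¹ := by positivity
  have hq2 : p - 1 - p/2 * (Real.sqrt 2)⁻¹ ≤ 0 := by nlinarith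
  -- pos/neg of velocities
  have pO0 : pos (a (0,0) 0) = p/2 := by rw [haO0]; exact pos_eq hq0
  have pO1 : pos (a (0,0) 1) = p/2 := by rw [haO1]; exact pos_eq hq0
  have nO0 : neg (a (0,0) 0) = 0 := by rw [haO0]; exact neg_eq0 hq0
  have nO1 : neg (a (0,0) 1) = 0 := by rw [haO1]; exact neg_eq0 hq0
  have pA0 : pos (a (1,0) 0) = 0 := by rw [haA0]; exact pos_eq0 hq2
  have nA0 : neg (a (1,0) 0) = -(p - 1 - p/2 * (Real.sqrt 2)⁻¹) := by
    rw [haA0]; exact neg_eq hq2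
  have pA1 : pos (a (1,0) 1) = p/2 * (Real.sqrt 2)⁻¹ := by rw [haA1]; exact pos_eq hq1
  have nA1 : neg (a (1,0) 1) = 0 := by rw [haA1]; exact neg_eq0 hq1
  have pB0 : pos (a (0,1) 0) = p/2 * (Real.sqrt 2)⁻¹ := by rw [haB0]; exact pos_eq hq1
  have nB0 : neg (a (0,1) 0) = 0 := by rw [haB0]; exact neg_eq0 hq1
  have pB1 : pos (a (0,1) 1) = 0 := by rw [haB1]; exact pos_eq0 hq2
  have nB1 : neg (a (0,1) 1) = -(p - 1 - p/2 * (Real.sqrt 2)⁻¹) := by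
    rw [haB1]; exact neg_eq hq2
  have pO0' : pos (a 0 0) = p/2 := pO0
  have pO1' : pos (a 0 1) = p/2 := pO1
  have nO0' : neg (a 0 0) = 0 := nO0
  have nO1' : neg (a 0 1) = 0 := nO1
  have e0 : eVec 0 = (1,0) := rfl
  have e1 : eVec 1 = (0,1) := rfl
  -- the new weights
  have key : ∀ J, ρ1 J = wgt p Δt J := by
    rintro ⟨m, n⟩
    by_cases c1 : ((m,n) : ℤ × ℤ) = (0,0)
    · rw [c1, hρ1, Fin.sum_univ_two, e0, e1]
      norm_num [ρ0w, Prod.mk.injEq, wgt, Prod.ext_iff, Prod.fst_one, Prod.snd_one, Prod.fst_zero, Prod.snd_zero]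
      rw [pO0, pO1, nO0, nO1, nA0, nB1]
      simp only [hinv]; ring
    by_cases c2 : ((m,n) : ℤ × ℤ) = (1,0)
    · rw [c2, hρ1, Fin.sum_univ_two, e0, e1]
      norm_num [ρ0w, Prod.mk.injEq, wgt, Prod.ext_iff, Prod.fst_one, Prod.snd_one, Prod.fst_zero, Prod.snd_zero]
      rw [pA0, pA1, nA0, nA1, pO0']
      simp only [hinv]; ring
    by_cases c3 : ((m,n) : ℤ × ℤ) = (0,1)
    · rw [c3, hρ1, Fin.sum_univ_two, e0, e1]
      norm_num [ρ0w, Prod.mk.injEq, wgt, Prod.ext_iff, Prod.fst_one, Prod.snd_one, Prod.fst_zero, Prod.snd_zero]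
      rw [pB0, pB1, nB0, nB1, pO1']
      simp only [hinv]; ring
    by_cases c4 : ((m,n) : ℤ × ℤ) = (1,1)
    · rw [c4, hρ1, Fin.sum_univ_two, e0, e1]
      norm_num [ρ0w, Prod.mk.injEq, wgt, Prod.ext_iff, Prod.fst_one, Prod.snd_one, Prod.fst_zero, Prod.snd_zero]
      rw [pB0, pA1]
      simp only [hinv]; ring
    by_cases c5 : ((m,n) : ℤ × ℤ) = (-1,0)
    · rw [c5, hρ1, Fin.sum_univ_two, e0, e1]
      norm_num [ρ0w, Prod.mk.injEq, wgt, Prod.ext_iff, Prod.fst_one, Prod.snd_one, Prod.fst_zero, Prod.snd_zero]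
      rw [nO0]
      norm_num
      try tauto
    by_cases c6 : ((m,n) : ℤ × ℤ) = (0,-1)
    · rw [c6, hρ1, Fin.sum_univ_two, e0, e1]
      norm_num [ρ0w, Prod.mk.injEq, wgt, Prod.ext_iff, Prod.fst_one, Prod.snd_one, Prod.fst_zero, Prod.snd_zero]
      rw [nO1]
      norm_num
      try tauto
    by_cases c7 : ((m,n) : ℤ × ℤ) = (2,0)
    · rw [c7, hρ1, Fin.sum_univ_two, e0, e1]
      norm_num [ρ0w, Prod.mk.injEq, wgt, Prod.ext_iff, Prod.fst_one, Prod.snd_one, Prod.fst_zero, Prod.snd_zero]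
      rw [pA0]
      norm_num
      try tauto
    by_cases c8 : ((m,n) : ℤ × ℤ) = (0,2)
    · rw [c8, hρ1, Fin.sum_univ_two, e0, e1]
      norm_num [ρ0w, Prod.mk.injEq, wgt, Prod.ext_iff, Prod.fst_one, Prod.snd_one, Prod.fst_zero, Prod.snd_zero]
      rw [pB1]
      norm_num
      try tauto
    by_cases c9 : ((m,n) : ℤ × ℤ) = (1,-1)
    · rw [c9, hρ1, Fin.sum_univ_two, e0, e1]
      norm_num [ρ0w, Prod.mk.injEq, wgt, Prod.ext_iff, Prod.fst_one, Prod.snd_one, Prod.fst_zero, Prod.snd_zero]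
      rw [nA1]
      norm_num
      try tauto
    by_cases c10 : ((m,n) : ℤ × ℤ) = (-1,1)
    · rw [c10, hρ1, Fin.sum_univ_two, e0, e1]
      norm_num [ρ0w, Prod.mk.injEq, wgt, Prod.ext_iff, Prod.fst_one, Prod.snd_one, Prod.fst_zero, Prod.snd_zero]
      rw [nB0]
      norm_num
      try tauto
    · simp only [Prod.mk.injEq] at c1 c2 c3 c4 c5 c6 c7 c8 c9 c10
      rw [hρ1, Fin.sum_univ_two, e0, e1]
      simp only [Prod.mk_add_mk, Prod.mk_sub_mk, add_zero, sub_zero]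
      rw [ρ0w_zero' p (by omega) (by omega) (by omega),
        ρ0w_zero' p (by omega) (by omega) (by omega),
        ρ0w_zero' p (by omega) (by omega) (by omega),
        ρ0w_zero' p (by omega) (by omega) (by omega),
        ρ0w_zero' p (by omega) (by omega) (by omega)]
      rw [wgt, if_neg (by simp [Prod.mk.injEq]; omega), if_neg (by simp [Prod.mk.injEq]; omega),
        if_neg (by simp [Prod.mk.injEq]; omega), if_neg (by simp [Prod.mk.injEq]; omega)]
      ring
  have expand : ∀ f : ℤ × ℤ → ℝ,
      ∑ J ∈ ({(0,0),(1,0),(0,1),(1,1)} : Finset (ℤ × ℤ)), f J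
        = f (0,0) + f (1,0) + f (0,1) + f (1,1) := by
    intro f
    rw [Finset.sum_insert (by decide), Finset.sum_insert (by decide),
      Finset.sum_insert (by decide), Finset.sum_singleton]
    ring
  -- interaction of the new weights
  have hI1 : interact ρ1 =
      4 * wgt p Δt (0,0) * wgt p Δt (1,0) + 2 * Real.sqrt 2 * (wgt p Δt (1,0))^2
        + 2 * Real.sqrt 2 * wgt p Δt (0,0) * wgt p Δt (1,1)
        + 4 * wgt p Δt (1,0) * wgt p Δt (1,1) := by
    have := interact_four ρ1 (fun J hJ => by
      rw [key]
      simp only [Finset.mem_insert, Finset.mem_singleton] at hJ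
      push_neg at hJ
      rw [wgt, if_neg hJ.1, if_neg hJ.2.1, if_neg hJ.2.2.1, if_neg hJ.2.2.2])
    rw [this, expand]
    simp only [expand, key]
    simp only [node2_sub, Prod.mk_sub_mk]
    norm_num [norm_node2, Real.sqrt_zero, Real.sqrt_one, wgt, Prod.mk.injEq, Prod.ext_iff,
      Prod.fst_one, Prod.snd_one, Prod.fst_zero, Prod.snd_zero]
    ring
  have hI0 : interact (ρ0w p) = 2 * p * (1 - p) + Real.sqrt 2 * p ^ 2 / 2 := by
    have h := interact_four (ρ0w p) (fun J hJ => by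
      simp only [Finset.mem_insert, Finset.mem_singleton] at hJ
      push_neg at hJ
      exact ρ0w_zero hJ.1 hJ.2.1 hJ.2.2.1)
    rw [h, expand]
    simp only [expand]
    simp only [node2_sub, Prod.mk_sub_mk]
    norm_num [norm_node2, Real.sqrt_zero, Real.sqrt_one, ρ0w, Prod.mk.injEq, Prod.ext_iff,
      Prod.fst_one, Prod.snd_one, Prod.fst_zero, Prod.snd_zero]
    ring
  have w00 : wgt p Δt (0,0) = 1 - p + Δt * p^2 * Real.sqrt 2 / 4 := by norm_num [wgt, Prod.ext_iff, Prod.fst_one, Prod.snd_one]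
  have w10 : wgt p Δt (1,0) = p/2 - Δt * p^2 * Real.sqrt 2 / 4 := by norm_num [wgt, Prod.ext_iff, Prod.fst_one, Prod.snd_one]
  have w11 : wgt p Δt (1,1) = Δt * p^2 * Real.sqrt 2 / 4 := by norm_num [wgt, Prod.ext_iff, Prod.fst_one, Prod.snd_one]
  rw [hI1, hI0, w00, w10, w11]
  have E : 4 * (1 - p + Δt * p^2 * Real.sqrt 2 / 4) * (p/2 - Δt * p^2 * Real.sqrt 2 / 4)
      + 2 * Real.sqrt 2 * (p/2 - Δt * p^2 * Real.sqrt 2 / 4)^2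
      + 2 * Real.sqrt 2 * (1 - p + Δt * p^2 * Real.sqrt 2 / 4) * (Δt * p^2 * Real.sqrt 2 / 4)
      + 4 * (p/2 - Δt * p^2 * Real.sqrt 2 / 4) * (Δt * p^2 * Real.sqrt 2 / 4)
      - (2 * p * (1 - p) + Real.sqrt 2 * p ^ 2 / 2)
      - (Real.sqrt 2 - 1) * p ^ 2 * (2 * p - 1) * Δt
      = -((2 - Real.sqrt 2) / 2 * p ^ 4 * Δt ^ 2) := by
    linear_combination (p^4 * Δt^2 * Real.sqrt 2 / 4 - p^4 * Δt^2 / 2 - p^3 * Δt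
      + p^2 * Δt / 2) * hsq
  have hCn : 0 ≤ (2 - Real.sqrt 2) / 2 * p ^ 4 * Δt ^ 2 :=
    mul_nonneg (mul_nonneg (by linarith) (by positivity)) (sq_nonneg Δt)
  rw [E, abs_neg, abs_of_nonneg hCn]
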